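/- Let b > 0 and define q : (0, ∞) → ℝ by q(x) = e^{b x²/2} / ( b·∫₀ˣ e^{b s²/2} ds ). Then q is well-defined and differentiable on (0,∞) and satisfies q'(x) = b·q(x)·( x − q(x) ) for all x > 0. Moreover, x·q(x) → 1/b as x → 0⁺, and q(x)/x → 1 as x → ∞. -/

import Mathlib

open Real Filter Topology

/-- The special solution `q(x) = e^{bx²/2} / (b·∫₀ˣ e^{bs²/2} ds)` of
`q' = b·q·(x − q)`, corresponding to the strong unstable manifold `W^{uu}`. -/
noncomputable def q13 (b x : ℝ) : ℝ :=
  Real.exp (b * x ^ 2 / 2) / (b * ∫ s in (0:ℝ)..x, Real.exp (b * s ^ 2 / 2))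

namespace Q13aux

lemma contf (b : ℝ) : Continuous fun s : ℝ => Real.exp (b * s ^ 2 / 2) := by
  fun_prop

lemma hderiv_f (b x : ℝ) :
    HasDerivAt (fun s : ℝ => Real.exp (b * s ^ 2 / 2))
      (b * x * Real.exp (b * x ^ 2 / 2)) x := by
  have h : HasDerivAt (fun s : ℝ => b * s ^ 2 / 2) (b * x) x := by
    have h0 := ((hasDerivAt_pow 2 x).const_mul b).div_const 2
    refine h0.congr_deriv ?_
    ring
  have h2 := h.exp
  convert h2 using 1
  ring

lemma hderiv_F (b x : ℝ) :
    HasDerivAt (fun u : ℝ => ∫ s in (0:ℝ)..u, Real.exp (b * s ^ 2 / 2))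
      (Real.exp (b * x ^ 2 / 2)) x :=
  intervalIntegral.integral_hasDerivAt_right ((contf b).intervalIntegrable _ _)
    ((contf b).stronglyMeasurableAtFilter _ _) (contf b).continuousAt

lemma Fpos {b : ℝ} {x : ℝ} (hx : 0 < x) :
    0 < ∫ s in (0:ℝ)..x, Real.exp (b * s ^ 2 / 2) :=
  intervalIntegral.intervalIntegral_pos_of_pos ((contf b).intervalIntegrable _ _)
    (fun s => Real.exp_pos _) hx

lemma int_id_mul {b : ℝ} (hb : 0 < b) (u v : ℝ) :
    ∫ s in u..v, s * Real.exp (b * s ^ 2 / 2)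
      = (Real.exp (b * v ^ 2 / 2) - Real.exp (b * u ^ 2 / 2)) / b := by
  have hd : ∀ t ∈ Set.uIcc u v,
      HasDerivAt (fun s : ℝ => Real.exp (b * s ^ 2 / 2) / b)
        (t * Real.exp (b * t ^ 2 / 2)) t := by
    intro t _
    have h0 := (hderiv_f b t).div_const b
    refine h0.congr_deriv ?_
    field_simp
  rw [intervalIntegral.integral_eq_sub_of_hasDerivAt hd
    ((continuous_id.mul (contf b)).intervalIntegrable _ _)]
  ring

lemma lower {b : ℝ} (hb : 0 < b) {x : ℝ} (hx : 0 < x) :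
    Real.exp (b * x ^ 2 / 2) - 1
      ≤ b * x * ∫ s in (0:ℝ)..x, Real.exp (b * s ^ 2 / 2) := by
  have h1 : (∫ s in (0:ℝ)..x, s * Real.exp (b * s ^ 2 / 2))
      ≤ ∫ s in (0:ℝ)..x, x * Real.exp (b * s ^ 2 / 2) := by
    apply intervalIntegral.integral_mono_on hx.le
      ((continuous_id.mul (contf b)).intervalIntegrable _ _)
      ((continuous_const.mul (contf b)).intervalIntegrable _ _)
    intro s hs
    exact mul_le_mul_of_nonneg_right hs.2 (Real.exp_pos _).le
  rw [int_id_mul hb, intervalIntegral.integral_const_mul] at h1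
  have h0 : Real.exp (b * (0:ℝ) ^ 2 / 2) = 1 := by norm_num
  rw [h0, div_le_iff₀ hb] at h1
  linarith

lemma upper {b : ℝ} (hb : 0 < b) {c x : ℝ} (hc0 : 0 < c) (hc1 : c < 1) (hx : 0 < x) :
    b * x * (∫ s in (0:ℝ)..x, Real.exp (b * s ^ 2 / 2))
      ≤ b * c * x ^ 2 * Real.exp (b * (c * x) ^ 2 / 2)
        + Real.exp (b * x ^ 2 / 2) / c := by
  set y := c * x with hy
  have hy0 : 0 < y := mul_pos hc0 hx
  have hyx : y < x := by
    rw [hy]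
    nlinarith
  -- F y ≤ y * f y
  have hFy : (∫ s in (0:ℝ)..y, Real.exp (b * s ^ 2 / 2))
      ≤ y * Real.exp (b * y ^ 2 / 2) := by
    have h1 : (∫ s in (0:ℝ)..y, Real.exp (b * s ^ 2 / 2))
        ≤ ∫ _s in (0:ℝ)..y, Real.exp (b * y ^ 2 / 2) := by
      apply intervalIntegral.integral_mono_on hy0.le
        ((contf b).intervalIntegrable _ _)
        (continuous_const.intervalIntegrable _ _)
      intro s hs
      have hs2 : s ^ 2 ≤ y ^ 2 := by nlinarith [hs.1, hs.2]
      have : b * s ^ 2 / 2 ≤ b * y ^ 2 / 2 := by nlinarith [mul_nonneg hb.le (sub_nonneg.2 hs2)]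
      exact Real.exp_le_exp.2 this
    simpa using h1
  -- tail integral bound
  have hI : (∫ s in y..x, Real.exp (b * s ^ 2 / 2))
      ≤ (Real.exp (b * x ^ 2 / 2) - Real.exp (b * y ^ 2 / 2)) / b / y := by
    have h1 : (∫ s in y..x, Real.exp (b * s ^ 2 / 2))
        ≤ ∫ s in y..x, s * Real.exp (b * s ^ 2 / 2) / y := by
      apply intervalIntegral.integral_mono_on hyx.le
        ((contf b).intervalIntegrable _ _)
        (((continuous_id.mul (contf b)).div_const y).intervalIntegrable _ _)
      intro s hs
      rw [le_div_iff₀ hy0]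
      simp only [Pi.mul_apply, id_eq]
      have := mul_le_mul_of_nonneg_right hs.1 (Real.exp_pos (b * s ^ 2 / 2)).le
      nlinarith
    rwa [intervalIntegral.integral_div, int_id_mul hb] at h1
  have split : (∫ s in (0:ℝ)..y, Real.exp (b * s ^ 2 / 2))
      + (∫ s in y..x, Real.exp (b * s ^ 2 / 2))
      = ∫ s in (0:ℝ)..x, Real.exp (b * s ^ 2 / 2) :=
    intervalIntegral.integral_add_adjacent_intervals
      ((contf b).intervalIntegrable _ _) ((contf b).intervalIntegrable _ _)
  have hFx : (∫ s in (0:ℝ)..x, Real.exp (b * s ^ 2 / 2))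
      ≤ y * Real.exp (b * y ^ 2 / 2)
        + (Real.exp (b * x ^ 2 / 2) - Real.exp (b * y ^ 2 / 2)) / b / y := by
    rw [← split]; linarith
  have hmul : b * x * (∫ s in (0:ℝ)..x, Real.exp (b * s ^ 2 / 2))
      ≤ b * x * (y * Real.exp (b * y ^ 2 / 2)
        + (Real.exp (b * x ^ 2 / 2) - Real.exp (b * y ^ 2 / 2)) / b / y) :=
    mul_le_mul_of_nonneg_left hFx (by positivity)
  have heq : b * x * (y * Real.exp (b * y ^ 2 / 2)
        + (Real.exp (b * x ^ 2 / 2) - Real.exp (b * y ^ 2 / 2)) / b / y)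
      = b * c * x ^ 2 * Real.exp (b * y ^ 2 / 2)
        + (Real.exp (b * x ^ 2 / 2) - Real.exp (b * y ^ 2 / 2)) / c := by
    rw [hy]
    field_simp
  have hpos : 0 < Real.exp (b * y ^ 2 / 2) / c :=
    div_pos (Real.exp_pos _) hc0
  rw [heq] at hmul
  have : (Real.exp (b * x ^ 2 / 2) - Real.exp (b * y ^ 2 / 2)) / c
      = Real.exp (b * x ^ 2 / 2) / c - Real.exp (b * y ^ 2 / 2) / c := by ring
  rw [this] at hmul
  rw [hy] at *
  linarith

lemma tendstoA {b : ℝ} (hb : 0 < b) {c : ℝ} (hc0 : 0 < c) (hc1 : c < 1) :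
    Tendsto (fun x : ℝ => b * c * x ^ 2
      * Real.exp (b * (c * x) ^ 2 / 2 - b * x ^ 2 / 2)) atTop (𝓝 0) := by
  set k := b * (1 - c ^ 2) / 2 with hk
  have hkpos : 0 < k := by
    have : 0 < 1 - c ^ 2 := by nlinarith
    positivity
  have t2 : Tendsto (fun x : ℝ => k * x ^ 2) atTop atTop :=
    (tendsto_pow_atTop two_ne_zero).const_mul_atTop hkpos
  have t1 := Real.tendsto_pow_mul_exp_neg_atTop_nhds_zero 1
  have t3 := (t1.comp t2).const_mul (b * c / k)
  rw [mul_zero] at t3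
  refine t3.congr fun x => ?_
  have he : b * (c * x) ^ 2 / 2 - b * x ^ 2 / 2 = -(k * x ^ 2) := by
    rw [hk]; ring
  simp only [Function.comp, pow_one, he]
  field_simp

lemma tendsto_h {b : ℝ} (hb : 0 < b) :
    Tendsto (fun x : ℝ => b * x * (∫ s in (0:ℝ)..x, Real.exp (b * s ^ 2 / 2))
      / Real.exp (b * x ^ 2 / 2)) atTop (𝓝 1) := by
  rw [Metric.tendsto_nhds]
  intro ε hε
  set c : ℝ := (1 + ε / 2)⁻¹ with hcdef
  have hc0 : 0 < c := by positivity
  have hc1 : c < 1 := by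
    rw [hcdef, inv_lt_one_iff₀]
    right; linarith
  have hcinv : 1 / c = 1 + ε / 2 := by
    rw [hcdef, one_div, inv_inv]
  have hA := (tendstoA hb hc0 hc1).eventually_lt_const (half_pos hε)
  have hE : Tendsto (fun x : ℝ => Real.exp (-(b * x ^ 2 / 2))) atTop (𝓝 0) := by
    apply Real.tendsto_exp_atBot.comp
    apply tendsto_neg_atTop_atBot.comp
    exact ((tendsto_pow_atTop two_ne_zero).const_mul_atTop (half_pos hb)).congr
      fun x => by ring
  have hE' := hE.eventually_lt_const hε
  filter_upwards [hA, hE', eventually_gt_atTop (0:ℝ)] with x h1 h2 h3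
  have low := lower hb h3
  have up := upper hb hc0 hc1 h3
  have hf : (0:ℝ) < Real.exp (b * x ^ 2 / 2) := Real.exp_pos _
  rw [Real.dist_eq, abs_lt]
  constructor
  · have hlow2 : (Real.exp (b * x ^ 2 / 2) - 1) / Real.exp (b * x ^ 2 / 2)
        ≤ b * x * (∫ s in (0:ℝ)..x, Real.exp (b * s ^ 2 / 2))
          / Real.exp (b * x ^ 2 / 2) := (div_le_div_iff_of_pos_right hf).2 low
    have hfin : (Real.exp (b * x ^ 2 / 2) - 1) / Real.exp (b * x ^ 2 / 2)
        = 1 - Real.exp (-(b * x ^ 2 / 2)) := by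
      rw [Real.exp_neg]
      field_simp
    rw [hfin] at hlow2
    linarith
  · have up2 : b * x * (∫ s in (0:ℝ)..x, Real.exp (b * s ^ 2 / 2))
        / Real.exp (b * x ^ 2 / 2)
        ≤ (b * c * x ^ 2 * Real.exp (b * (c * x) ^ 2 / 2)
            + Real.exp (b * x ^ 2 / 2) / c) / Real.exp (b * x ^ 2 / 2) :=
      (div_le_div_iff_of_pos_right hf).2 up
    have key : (b * c * x ^ 2 * Real.exp (b * (c * x) ^ 2 / 2)
          + Real.exp (b * x ^ 2 / 2) / c) / Real.exp (b * x ^ 2 / 2)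
        = b * c * x ^ 2 * Real.exp (b * (c * x) ^ 2 / 2 - b * x ^ 2 / 2) + 1 / c := by
      rw [add_div, mul_div_assoc, ← Real.exp_sub, div_right_comm, div_self hf.ne']
    rw [key] at up2
    linarith

end Q13aux

open Q13aux in
/-- `q13` is well-defined (positive denominator) and differentiable on `(0,∞)` and
satisfies `q' = b q (x − q)` there; moreover `x·q(x) → 1/b` as `x → 0⁺` and
`q(x)/x → 1` as `x → ∞`. -/
theorem stmt13 (b : ℝ) (hb : 0 < b) :
    (∀ x : ℝ, 0 < x → 0 < b * ∫ s in (0:ℝ)..x, Real.exp (b * s ^ 2 / 2)) ∧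
    (∀ x : ℝ, 0 < x →
      HasDerivAt (q13 b) (b * q13 b x * (x - q13 b x)) x) ∧
    Tendsto (fun x : ℝ => x * q13 b x) (nhdsWithin 0 (Set.Ioi 0)) (nhds (1 / b)) ∧
    Tendsto (fun x : ℝ => q13 b x / x) atTop (nhds 1) := by
  refine ⟨fun x hx => mul_pos hb (Fpos hx), ?_, ?_, ?_⟩
  · intro x hx
    have hD : (b * ∫ s in (0:ℝ)..x, Real.exp (b * s ^ 2 / 2)) ≠ 0 :=
      (mul_pos hb (Fpos hx)).ne'
    have h := (hderiv_f b x).div ((hderiv_F b x).const_mul b) hD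
    refine h.congr_deriv ?_
    simp only [q13]
    field_simp [(Fpos (b := b) hx).ne']
  · -- limit at 0⁺
    have hF0 : HasDerivAt
        (fun u : ℝ => ∫ s in (0:ℝ)..u, Real.exp (b * s ^ 2 / 2)) 1 0 := by
      have := hderiv_F b 0
      norm_num at this
      exact this
    rw [hasDerivAt_iff_tendsto_slope] at hF0
    have hslope : Tendsto
        (fun x : ℝ => (∫ s in (0:ℝ)..x, Real.exp (b * s ^ 2 / 2)) / x)
        (nhdsWithin 0 (Set.Ioi 0)) (nhds 1) := by
      have h' := hF0.mono_left
        (nhdsWithin_mono 0 (fun y hy => ne_of_gt hy : Set.Ioi (0:ℝ) ⊆ {(0:ℝ)}ᶜ))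
      refine h'.congr fun x => ?_
      simp [slope_def_field]
    have hnum : Tendsto (fun x : ℝ => Real.exp (b * x ^ 2 / 2))
        (nhdsWithin 0 (Set.Ioi 0)) (nhds 1) := by
      have h1 : Tendsto (fun x : ℝ => Real.exp (b * x ^ 2 / 2)) (nhds 0) (nhds 1) := by
        have h2 := (contf b).tendsto 0
        norm_num at h2
        exact h2
      exact h1.mono_left nhdsWithin_le_nhds
    have hden := hslope.const_mul b
    rw [mul_one] at hden
    have hmain := hnum.div hden hb.ne'
    refine hmain.congr fun x => ?_
    simp only [Pi.div_apply, q13]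
    rw [show b * ((∫ s in (0:ℝ)..x, Real.exp (b * s ^ 2 / 2)) / x)
        = (b * ∫ s in (0:ℝ)..x, Real.exp (b * s ^ 2 / 2)) / x from
      (mul_div_assoc b _ x).symm]
    rw [div_div_eq_mul_div]
    ring
  · -- limit at ∞
    have hinv := (tendsto_h hb).inv₀ one_ne_zero
    rw [inv_one] at hinv
    refine hinv.congr fun x => ?_
    rw [inv_div, q13, div_div, mul_right_comm]
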